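/- If A ∈ ℝ^{m×n} has full row rank, V is a null-space basis matrix of A, and x, s ∈ ℝ^n are strictly positive, then the matrix O = [−X Aᵀ S V] ∈ ℝ^{n×n} is invertible. -/

import Mathlib

open Matrix

/-- Aᵀ.mulVec is injective when A has full row rank. -/
lemma transpose_mulVec_injective {m n : ℕ} (A : Matrix (Fin m) (Fin n) ℝ)
    (hrank : A.rank = m) : Function.Injective Aᵀ.mulVecLin := by
  rw [← LinearMap.ker_eq_bot]
  have h1 := LinearMap.finrank_range_add_finrank_ker Aᵀ.mulVecLin
  have h3 : Module.finrank ℝ (LinearMap.range Aᵀ.mulVecLin) = m := by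
    have h2 : Aᵀ.rank = m := by rw [Matrix.rank_transpose, hrank]
    simpa [Matrix.rank] using h2
  rw [h3, Module.finrank_fin_fun] at h1
  exact Submodule.finrank_eq_zero.mp (by omega)

/-- if A has full row rank, V is a null-space basis matrix of A,
and x, s > 0, then O = [-X Aᵀ  S V] is invertible. -/
theorem oss_matrix_invertible {m k n : ℕ}
    (A : Matrix (Fin m) (Fin n) ℝ) (hrank : A.rank = m)
    (V : Matrix (Fin n) (Fin k) ℝ)
    (hVrange : LinearMap.range V.mulVecLin = LinearMap.ker A.mulVecLin)
    (hVinj : Function.Injective V.mulVecLin)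
    (x s : Fin n → ℝ) (hx : ∀ i, 0 < x i) (hs : ∀ i, 0 < s i)
    (e : Fin m ⊕ Fin k ≃ Fin n)
    (O : Matrix (Fin n) (Fin n) ℝ)
    (hO : ∀ i j, O i j =
      Sum.elim (fun p => -(x i) * A p i) (fun q => s i * V i q) (e.symm j)) :
    IsUnit O.det := by
  rw [← Matrix.isUnit_iff_isUnit_det, ← Matrix.mulVec_injective_iff_isUnit,
    ← Matrix.coe_mulVecLin, ← LinearMap.ker_eq_bot, LinearMap.ker_eq_bot']
  intro u hu
  have hu' : O.mulVec u = 0 := hu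
  set y : Fin m → ℝ := fun p => u (e (Sum.inl p)) with hy
  set z : Fin k → ℝ := fun q => u (e (Sum.inr q)) with hz
  -- key pointwise equation: x i * (Aᵀ *ᵥ y) i = s i * (V *ᵥ z) i
  have key : ∀ i, x i * (Aᵀ.mulVec y) i = s i * (V.mulVec z) i := by
    intro i
    have h0 : (O.mulVec u) i = 0 := by rw [hu']; rfl
    have hsum : (O.mulVec u) i
        = ∑ c : Fin m ⊕ Fin k, O i (e c) * u (e c) := by
      simp only [Matrix.mulVec, dotProduct]
      exact (Fintype.sum_equiv e _ _ (fun c => rfl)).symm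
    rw [hsum, Fintype.sum_sum_type] at h0
    simp only [hO, Equiv.symm_apply_apply, Sum.elim_inl, Sum.elim_inr] at h0
    have hAy : (Aᵀ.mulVec y) i = ∑ p, A p i * y p := by
      simp [Matrix.mulVec, dotProduct, Matrix.transpose_apply]
    have hVz : (V.mulVec z) i = ∑ q, V i q * z q := by
      simp [Matrix.mulVec, dotProduct]
    have h1 : ∑ p, -x i * A p i * y p = -(x i * ∑ p, A p i * y p) := by
      rw [Finset.mul_sum, ← Finset.sum_neg_distrib]
      exact Finset.sum_congr rfl fun p _ => by ring
    have h2 : ∑ q, s i * V i q * z q = s i * ∑ q, V i q * z q := by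
      rw [Finset.mul_sum]
      exact Finset.sum_congr rfl fun q _ => by ring
    rw [h1, h2] at h0
    rw [hAy, hVz]
    linarith
  -- orthogonality: ⟨Aᵀ y, V z⟩ = 0
  have hker : V.mulVec z ∈ LinearMap.ker A.mulVecLin := by
    rw [← hVrange]; exact ⟨z, rfl⟩
  have hAVz : A.mulVec (V.mulVec z) = 0 := hker
  have horth : ∑ i, (Aᵀ.mulVec y) i * (V.mulVec z) i = 0 := by
    have : (Aᵀ.mulVec y) ⬝ᵥ (V.mulVec z) = 0 := by
      rw [Matrix.mulVec_transpose, ← Matrix.dotProduct_mulVec, hAVz,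
        dotProduct_zero]
    simpa [dotProduct] using this
  -- deduce V z = 0
  have hVz0 : V.mulVec z = 0 := by
    have hterm : ∀ i, (Aᵀ.mulVec y) i = s i / x i * (V.mulVec z) i := by
      intro i
      rw [div_mul_eq_mul_div, eq_div_iff (hx i).ne']
      linarith [key i]
    have hsum0 : ∑ i, s i / x i * (V.mulVec z) i ^ 2 = 0 := by
      rw [← horth]
      exact Finset.sum_congr rfl fun i _ => by rw [hterm i]; ring
    funext i
    have hnneg : ∀ j ∈ Finset.univ, (0:ℝ) ≤ s j / x j * (V.mulVec z) j ^ 2 :=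
      fun j _ => mul_nonneg (le_of_lt (div_pos (hs j) (hx j))) (sq_nonneg _)
    have hzero := (Finset.sum_eq_zero_iff_of_nonneg hnneg).mp hsum0 i (Finset.mem_univ i)
    have hpos : 0 < s i / x i := div_pos (hs i) (hx i)
    have hsq : (V.mulVec z) i ^ 2 = 0 := by
      rcases mul_eq_zero.mp hzero with h | h
      · exact absurd h hpos.ne'
      · exact h
    simpa [pow_eq_zero_iff] using hsq
  have hz0 : z = 0 := by
    apply hVinj
    simpa [Matrix.mulVecLin] using hVz0
  -- deduce Aᵀ y = 0 then y = 0
  have hAy0 : Aᵀ.mulVec y = 0 := by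
    funext i
    have h := key i
    rw [hVz0] at h
    simp only [Pi.zero_apply, mul_zero] at h
    rcases mul_eq_zero.mp h with h | h
    · exact absurd h (ne_of_gt (hx i))
    · exact h
  have hy0 : y = 0 := by
    apply transpose_mulVec_injective A hrank
    simpa [Matrix.mulVecLin, Matrix.mulVec_transpose] using hAy0
  -- conclude u = 0
  funext j
  have huj : u (e (e.symm j)) = 0 := by
    rcases hcase : e.symm j with p | q
    · exact congrFun hy0 p
    · exact congrFun hz0 q
  simpa using huj
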